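/- For any real positive definite 2n×2n matrix A, the matrix A # (Ω A⁻¹ Ωᵀ) satisfies the Heisenberg uncertainty relation, i.e., A#(ΩA⁻¹Ωᵀ) + iΩ ≥ 0 as a complex Hermitian matrix; in fact all symplectic eigenvalues of A#(ΩA⁻¹Ωᵀ) equal 1. -/

import Mathlib

open Matrix
open scoped ComplexOrder

/-- Total matrix square root: the PSD square root on PSD matrices, `0` elsewhere. -/
noncomputable def msqrt {𝕜 : Type*} [RCLike 𝕜] {n : Type*} [Fintype n] [DecidableEq n]
    (A : Matrix n n 𝕜) : Matrix n n 𝕜 :=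
  letI := Classical.dec A.PosSemidef
  if h : A.PosSemidef then
    (h.1.eigenvectorUnitary : Matrix n n 𝕜) *
      diagonal ((↑) ∘ (Real.sqrt ·) ∘ h.1.eigenvalues) *
      (star h.1.eigenvectorUnitary : Matrix n n 𝕜)
  else 0

/-- The matrix geometric mean `A # B = A^{1/2} (A^{-1/2} B A^{-1/2})^{1/2} A^{1/2}`. -/
noncomputable def geomMean {𝕜 : Type*} [RCLike 𝕜] {n : Type*} [Fintype n] [DecidableEq n]
    (A B : Matrix n n 𝕜) : Matrix n n 𝕜 :=
  msqrt A * msqrt ((msqrt A)⁻¹ * B * (msqrt A)⁻¹) * msqrt A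

/-- The standard symplectic form `Ω = [[0, I],[-I, 0]]` in position-momentum ordering. -/
def symForm (n : ℕ) : Matrix (Fin n ⊕ Fin n) (Fin n ⊕ Fin n) ℝ :=
  Matrix.fromBlocks 0 1 (-1) 0

open scoped MatrixOrder

variable {k : Type*} [Fintype k] [DecidableEq k]

lemma isUnit_transpose' {B : Matrix k k ℝ} (h : IsUnit B) : IsUnit Bᵀ := by
  rw [Matrix.isUnit_iff_isUnit_det, Matrix.det_transpose, ← Matrix.isUnit_iff_isUnit_det]; exact h

lemma posDef_of_posSemidef_isUnit {M : Matrix k k ℝ} (h : M.PosSemidef)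
    (hu : IsUnit M) : M.PosDef := by
  refine PosDef.of_dotProduct_mulVec_pos h.1 fun x hx =>
    lt_of_le_of_ne (h.dotProduct_mulVec_nonneg x) fun he => hx ?_
  have h0 : M *ᵥ x = 0 := (h.dotProduct_mulVec_zero_iff x).mp he.symm
  have hinj := (Matrix.mulVec_injective_iff_isUnit).mpr hu
  have := hinj (by simpa using h0 : M *ᵥ x = M *ᵥ 0)
  simpa using this

lemma posDef_cong {M B : Matrix k k ℝ} (hM : M.PosDef) (hB : IsUnit B) :
    (B * M * Bᵀ).PosDef := by
  have hpsd : (B * M * Bᴴ).PosSemidef := hM.posSemidef.mul_mul_conjTranspose_same B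
  rw [conjTranspose_eq_transpose_of_trivial] at hpsd
  exact posDef_of_posSemidef_isUnit hpsd ((hB.mul hM.isUnit).mul (isUnit_transpose' hB))

lemma msqrt_eq {A : Matrix k k ℝ} (h : A.PosSemidef) : msqrt A = CFC.sqrt A := by
  rw [CFC.sqrt_eq_real_sqrt A (nonneg_iff_posSemidef.mpr h), cfcₙ_eq_cfc, h.1.cfc_eq]
  unfold msqrt
  rw [dif_pos h, IsHermitian.cfc, Unitary.conjStarAlgAut_apply]

section sqrtFacts
variable {A : Matrix k k ℝ} (hA : A.PosDef)

include hA

lemma msqrt_posSemidef : (msqrt A).PosSemidef := by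
  rw [msqrt_eq hA.posSemidef]; exact nonneg_iff_posSemidef.mp (CFC.sqrt_nonneg A)

lemma msqrt_mul_self : msqrt A * msqrt A = A := by
  rw [msqrt_eq hA.posSemidef]; exact CFC.sqrt_mul_sqrt_self A (nonneg_iff_posSemidef.mpr hA.posSemidef)

lemma msqrt_isUnit : IsUnit (msqrt A) := by
  have h : IsUnit ((msqrt A).det * (msqrt A).det) := by
    rw [← Matrix.det_mul, msqrt_mul_self hA, ← Matrix.isUnit_iff_isUnit_det]
    exact hA.isUnit
  exact (Matrix.isUnit_iff_isUnit_det _).mpr (isUnit_of_mul_isUnit_left h)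

lemma msqrt_posDef : (msqrt A).PosDef :=
  posDef_of_posSemidef_isUnit (msqrt_posSemidef hA) (msqrt_isUnit hA)

lemma msqrt_transpose : (msqrt A)ᵀ = msqrt A := by
  have := (msqrt_posSemidef hA).1
  rwa [IsHermitian, conjTranspose_eq_transpose_of_trivial] at this

lemma msqrt_inv_transpose : ((msqrt A)⁻¹)ᵀ = (msqrt A)⁻¹ := by
  rw [Matrix.transpose_nonsing_inv, msqrt_transpose hA]

lemma msqrt_mul_inv : msqrt A * (msqrt A)⁻¹ = 1 :=
  Matrix.mul_nonsing_inv _ ((Matrix.isUnit_iff_isUnit_det _).mp (msqrt_isUnit hA))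

lemma msqrt_inv_mul : (msqrt A)⁻¹ * msqrt A = 1 :=
  Matrix.nonsing_inv_mul _ ((Matrix.isUnit_iff_isUnit_det _).mp (msqrt_isUnit hA))

lemma inv_eq_msqrt_inv : A⁻¹ = (msqrt A)⁻¹ * (msqrt A)⁻¹ := by
  rw [← Matrix.mul_inv_rev, msqrt_mul_self hA]

end sqrtFacts

section geomMeanFacts
variable {A B : Matrix k k ℝ} (hA : A.PosDef) (hB : B.PosDef)

include hA hB

lemma inner_posDef : ((msqrt A)⁻¹ * B * (msqrt A)⁻¹).PosDef := by
  have := posDef_cong hB ((Matrix.isUnit_nonsing_inv_iff ..).mpr (msqrt_isUnit hA))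
  rwa [msqrt_inv_transpose hA] at this

lemma geomMean_posDef : (geomMean A B).PosDef := by
  have h := posDef_cong (msqrt_posDef (inner_posDef hA hB)) (msqrt_isUnit hA)
  rw [msqrt_transpose hA] at h
  exact h

lemma geomMean_transpose : (geomMean A B)ᵀ = geomMean A B := by
  have := (geomMean_posDef hA hB).1
  rwa [IsHermitian, conjTranspose_eq_transpose_of_trivial] at this

lemma geomMean_mul_inv_mul : geomMean A B * A⁻¹ * geomMean A B = B := by
  have hC := inner_posDef hA hB
  rw [geomMean, inv_eq_msqrt_inv hA]
  calc msqrt A * msqrt ((msqrt A)⁻¹ * B * (msqrt A)⁻¹) * msqrt A *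
        ((msqrt A)⁻¹ * (msqrt A)⁻¹) *
        (msqrt A * msqrt ((msqrt A)⁻¹ * B * (msqrt A)⁻¹) * msqrt A)
      = msqrt A * (msqrt ((msqrt A)⁻¹ * B * (msqrt A)⁻¹) *
          ((msqrt A * (msqrt A)⁻¹) * ((msqrt A)⁻¹ * msqrt A)) *
          msqrt ((msqrt A)⁻¹ * B * (msqrt A)⁻¹)) * msqrt A := by
        noncomm_ring
    _ = msqrt A * ((msqrt A)⁻¹ * B * (msqrt A)⁻¹) * msqrt A := by
        rw [msqrt_mul_inv hA, msqrt_inv_mul hA, mul_one, mul_one, msqrt_mul_self hC]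
    _ = (msqrt A * (msqrt A)⁻¹) * B * ((msqrt A)⁻¹ * msqrt A) := by noncomm_ring
    _ = B := by rw [msqrt_mul_inv hA, msqrt_inv_mul hA, one_mul, mul_one]

lemma eq_geomMean {X : Matrix k k ℝ} (hX : X.PosDef)
    (hEq : X * A⁻¹ * X = B) : X = geomMean A B := by
  have hC := inner_posDef hA hB
  have hY : ((msqrt A)⁻¹ * X * (msqrt A)⁻¹).PosDef := by
    have := posDef_cong hX ((Matrix.isUnit_nonsing_inv_iff ..).mpr (msqrt_isUnit hA))
    rwa [msqrt_inv_transpose hA] at this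
  have hYsq : ((msqrt A)⁻¹ * X * (msqrt A)⁻¹) ^ 2 = (msqrt A)⁻¹ * B * (msqrt A)⁻¹ := by
    rw [← hEq, inv_eq_msqrt_inv hA, pow_two]
    noncomm_ring
  have := (CFC.sqrt_unique (a := (msqrt A)⁻¹ * B * (msqrt A)⁻¹) (by rw [← pow_two]; exact hYsq)
    (nonneg_iff_posSemidef.mpr hY.posSemidef)).symm
  rw [← msqrt_eq hC.posSemidef] at this
  have h2 : msqrt A * ((msqrt A)⁻¹ * X * (msqrt A)⁻¹) * msqrt A = X := by
    calc msqrt A * ((msqrt A)⁻¹ * X * (msqrt A)⁻¹) * msqrt A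
        = (msqrt A * (msqrt A)⁻¹) * X * ((msqrt A)⁻¹ * msqrt A) := by noncomm_ring
      _ = X := by rw [msqrt_mul_inv hA, msqrt_inv_mul hA, one_mul, mul_one]
  rw [geomMean, ← this, h2]

end geomMeanFacts

section symFormFacts
variable (n : ℕ)

lemma symForm_transpose : (symForm n)ᵀ = -(symForm n) := by
  simp [symForm, Matrix.fromBlocks_transpose, Matrix.fromBlocks_neg]

lemma symForm_mul_self : symForm n * symForm n = -1 := by
  simp only [symForm, Matrix.fromBlocks_multiply]
  simp [← Matrix.fromBlocks_one, Matrix.fromBlocks_neg]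

lemma symForm_mul_transpose : symForm n * (symForm n)ᵀ = 1 := by
  rw [symForm_transpose, Matrix.mul_neg, symForm_mul_self]; simp

lemma symForm_transpose_mul : (symForm n)ᵀ * symForm n = 1 := by
  rw [symForm_transpose, Matrix.neg_mul, symForm_mul_self]; simp

lemma symForm_isUnit : IsUnit (symForm n) := by
  rw [Matrix.isUnit_iff_isUnit_det]
  have := congrArg Matrix.det (symForm_mul_transpose n)
  rw [Matrix.det_mul, Matrix.det_one] at this
  exact IsUnit.of_mul_eq_one _ this

end symFormFacts

/-- For any real positive definite `A`, the matrix `A # (Ω A⁻¹ Ωᵀ)` satisfies the Heisenberg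
uncertainty relation; in fact all of its symplectic eigenvalues equal `1`. -/
theorem geomMean_is_pure_qcm (n : ℕ)
    (A : Matrix (Fin n ⊕ Fin n) (Fin n ⊕ Fin n) ℝ) (hA : A.PosDef) :
    ((geomMean A (symForm n * A⁻¹ * (symForm n)ᵀ)).map Complex.ofReal +
        Complex.I • (symForm n).map Complex.ofReal).PosSemidef ∧
      ∃ S : Matrix (Fin n ⊕ Fin n) (Fin n ⊕ Fin n) ℝ,
        S * symForm n * Sᵀ = symForm n ∧
        S * geomMean A (symForm n * A⁻¹ * (symForm n)ᵀ) * Sᵀ = 1 := by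
  set Ω := symForm n with hΩdef
  set B := Ω * A⁻¹ * Ωᵀ with hBdef
  have hΩu : IsUnit Ω := symForm_isUnit n
  have hΩT : Ω * Ωᵀ = 1 := symForm_mul_transpose n
  have hTΩ : Ωᵀ * Ω = 1 := symForm_transpose_mul n
  have hΩneg : Ωᵀ = -Ω := symForm_transpose n
  have hB : B.PosDef := posDef_cong hA.inv hΩu
  set G := geomMean A B with hGdef
  have hG : G.PosDef := geomMean_posDef hA hB
  have hGAB : G * A⁻¹ * G = B := geomMean_mul_inv_mul hA hB
  have hGdetu : IsUnit G.det := (Matrix.isUnit_iff_isUnit_det G).mp hG.isUnit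
  have hGGi : G * G⁻¹ = 1 := Matrix.mul_nonsing_inv _ hGdetu
  have hGiG : G⁻¹ * G = 1 := Matrix.nonsing_inv_mul _ hGdetu
  -- G⁻¹ * B * G⁻¹ = A⁻¹
  have hGBG : G⁻¹ * B * G⁻¹ = A⁻¹ := by
    rw [← hGAB]
    calc G⁻¹ * (G * A⁻¹ * G) * G⁻¹ = (G⁻¹ * G) * A⁻¹ * (G * G⁻¹) := by noncomm_ring
      _ = A⁻¹ := by rw [hGiG, hGGi, one_mul, mul_one]
  -- Ωᵀ G⁻¹ Ω = G
  have hX : (Ωᵀ * G⁻¹ * Ω).PosDef := by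
    have := posDef_cong hG.inv (isUnit_transpose' hΩu)
    rwa [Matrix.transpose_transpose] at this
  have hXeq : (Ωᵀ * G⁻¹ * Ω) * A⁻¹ * (Ωᵀ * G⁻¹ * Ω) = B := by
    calc (Ωᵀ * G⁻¹ * Ω) * A⁻¹ * (Ωᵀ * G⁻¹ * Ω)
        = Ωᵀ * (G⁻¹ * (Ω * A⁻¹ * Ωᵀ) * G⁻¹) * Ω := by noncomm_ring
      _ = Ωᵀ * A⁻¹ * Ω := by rw [← hBdef, hGBG]
      _ = B := by
          rw [hBdef, hΩneg]
          simp [Matrix.neg_mul, Matrix.mul_neg]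
  have hXG : Ωᵀ * G⁻¹ * Ω = G := eq_geomMean hA hB hX hXeq
  -- Ωᵀ G Ω = G⁻¹
  have hOGO : Ωᵀ * G * Ω = G⁻¹ := by
    have h := congrArg (fun M => Ω * M * Ωᵀ) hXG
    have h2 : Ω * (Ωᵀ * G⁻¹ * Ω) * Ωᵀ = G⁻¹ := by
      calc Ω * (Ωᵀ * G⁻¹ * Ω) * Ωᵀ = (Ω * Ωᵀ) * G⁻¹ * (Ω * Ωᵀ) := by noncomm_ring
        _ = G⁻¹ := by rw [hΩT, one_mul, mul_one]
    rw [h2] at h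
    calc Ωᵀ * G * Ω = Ω * G * Ωᵀ := by
          rw [hΩneg]; simp [Matrix.neg_mul, Matrix.mul_neg]
      _ = G⁻¹ := h.symm
  -- square root R of G
  set R := msqrt G with hRdef
  have hRR : R * R = G := msqrt_mul_self hG
  have hRs : Rᵀ = R := msqrt_transpose hG
  have hRpd : R.PosDef := msqrt_posDef hG
  have hRiR : R⁻¹ * R = 1 := msqrt_inv_mul hG
  have hRRi : R * R⁻¹ = 1 := msqrt_mul_inv hG
  have hORO : Ωᵀ * R * Ω = R⁻¹ := by
    have h1 : (Ωᵀ * R * Ω).PosSemidef := by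
      have h' := posDef_cong hRpd (isUnit_transpose' hΩu)
      rw [Matrix.transpose_transpose] at h'
      exact h'.posSemidef
    have h2 : (R⁻¹).PosSemidef := hRpd.inv.posSemidef
    refine (CFC.sq_eq_sq_iff _ _ (nonneg_iff_posSemidef.mpr h1)
      (nonneg_iff_posSemidef.mpr h2)).mp ?_
    have e1 : (Ωᵀ * R * Ω) ^ 2 = Ωᵀ * G * Ω := by
      rw [pow_two]
      calc (Ωᵀ * R * Ω) * (Ωᵀ * R * Ω) = Ωᵀ * (R * (Ω * Ωᵀ) * R) * Ω := by noncomm_ring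
        _ = Ωᵀ * G * Ω := by rw [hΩT, mul_one, hRR]
    have e2 : (R⁻¹) ^ 2 = G⁻¹ := by
      rw [pow_two, ← Matrix.mul_inv_rev, hRR]
    rw [e1, e2, hOGO]
  have hROR : R * Ω * R = Ω := by
    have hRO : R * Ω = Ω * R⁻¹ := by
      have h := congrArg (fun M => Ω * M) hORO
      calc R * Ω = (Ω * Ωᵀ) * (R * Ω) := by rw [hΩT, one_mul]
        _ = Ω * (Ωᵀ * R * Ω) := by noncomm_ring
        _ = Ω * R⁻¹ := by rw [hORO]
    rw [hRO, Matrix.mul_assoc, hRiR, mul_one]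
  have hRiT : (R⁻¹)ᵀ = R⁻¹ := by rw [Matrix.transpose_nonsing_inv, hRs]
  refine ⟨?_, ⟨R⁻¹, ?_, ?_⟩⟩
  · -- PSD part
    set c : ℂ := (((Real.sqrt 2)⁻¹ : ℝ) : ℂ) with hcdef
    set Rc := R.map Complex.ofReal with hRcdef
    set Ωc := Ω.map Complex.ofReal with hΩcdef
    have mc_mul : ∀ M N : Matrix (Fin n ⊕ Fin n) (Fin n ⊕ Fin n) ℝ,
        (M * N).map Complex.ofReal = M.map Complex.ofReal * N.map Complex.ofReal :=
      fun M N => Matrix.map_mul (f := Complex.ofRealHom)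
    have hRcH : Rcᴴ = Rc := by
      ext i j
      simp only [hRcdef, Matrix.conjTranspose_apply, Matrix.map_apply, Complex.star_def,
        Complex.conj_ofReal]
      exact congrArg Complex.ofReal (congrFun (congrFun hRs i) j)
    have hΩcH : Ωcᴴ = -Ωc := by
      ext i j
      simp only [hΩcdef, Matrix.conjTranspose_apply, Matrix.map_apply, Complex.conj_ofReal,
        Matrix.neg_apply]
      have := congrFun (congrFun (symForm_transpose n) i) j
      simp only [Matrix.transpose_apply, Matrix.neg_apply] at this
      rw [← hΩdef] at this
      rw [this]
      simp [Complex.star_def, Complex.conj_ofReal]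
    have hΩc2 : Ωc * Ωc = -1 := by
      rw [hΩcdef, ← mc_mul, hΩdef, symForm_mul_self]
      ext i j
      by_cases h : i = j <;> simp [Matrix.map_apply, Matrix.one_apply, h]
    set H : Matrix (Fin n ⊕ Fin n) (Fin n ⊕ Fin n) ℂ := 1 + Complex.I • Ωc with hHdef
    have hHH : Hᴴ = H := by
      rw [hHdef, conjTranspose_add, conjTranspose_smul, conjTranspose_one, hΩcH]
      simp [Complex.star_def, Complex.conj_I]
    have hH2 : H * H = (2 : ℂ) • H := by
      have hsq : (Complex.I • Ωc) * (Complex.I • Ωc) = 1 := by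
        rw [smul_mul_smul_comm, Complex.I_mul_I, hΩc2]
        simp
      rw [hHdef, mul_add, add_mul, add_mul, hsq, two_smul]
      simp only [mul_one, one_mul]
      abel
    have hHpsd : H.PosSemidef := by
      have hstar : star c = c := by
        rw [hcdef]; exact Complex.conj_ofReal _
      have hcc : c * c = (2 : ℂ)⁻¹ := by
        rw [hcdef, ← Complex.ofReal_mul, ← mul_inv,
          Real.mul_self_sqrt (by norm_num : (0:ℝ) ≤ 2)]
        norm_num
      have key : H = (c • H)ᴴ * (c • H) := by
        rw [conjTranspose_smul, hHH, hstar, smul_mul_smul_comm, hcc, hH2, smul_smul]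
        norm_num
      rw [key]
      exact posSemidef_conjTranspose_mul_self (c • H)
    have hkey : G.map Complex.ofReal + Complex.I • Ωc = Rc * H * Rcᴴ := by
      rw [hRcH, hHdef, mul_add, mul_one, mul_smul_comm, add_mul, smul_mul_assoc,
        hRcdef, hΩcdef, ← mc_mul, ← mc_mul, ← mc_mul, hRR, hROR]
    rw [hkey]
    exact hHpsd.mul_mul_conjTranspose_same Rc
  · -- symplectic
    rw [hRiT]
    calc R⁻¹ * Ω * R⁻¹ = R⁻¹ * (R * Ω * R) * R⁻¹ := by rw [hROR]
      _ = (R⁻¹ * R) * Ω * (R * R⁻¹) := by noncomm_ring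
      _ = Ω := by rw [hRiR, hRRi, one_mul, mul_one]
  · rw [hRiT, ← hRR]
    calc R⁻¹ * (R * R) * R⁻¹ = (R⁻¹ * R) * (R * R⁻¹) := by noncomm_ring
      _ = 1 := by rw [hRiR, hRRi, one_mul]
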